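/- For special measure-and-prepare instruments, the instrument incompatibility robustness equals the measurement incompatibility robustness of the underlying POVMs: R_I(𝔍_{A₁}, 𝔍_{A₂}) = R_M(A₁, A₂). -/

import Mathlib

open Matrix
open scoped Kronecker BigOperators ComplexOrder

noncomputable section

namespace QI

/-- Linear maps between matrix algebras (superoperators). -/
abbrev MatMap (n m : Type*) [Fintype n] [Fintype m] :=
  Matrix n n ℂ →ₗ[ℂ] Matrix m m ℂ

variable {n m m₁ m₂ ι ι₁ ι₂ : Type*}

/-- The Choi matrix of a superoperator. -/
def choi [Fintype n] [DecidableEq n] [Fintype m] (Φ : MatMap n m) :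
    Matrix (n × m) (n × m) ℂ :=
  Matrix.of fun p q => Φ (Matrix.single p.1 q.1 1) p.2 q.2

/-- Complete positivity, via positive semidefiniteness of the Choi matrix. -/
def IsCP [Fintype n] [DecidableEq n] [Fintype m] (Φ : MatMap n m) : Prop :=
  (choi Φ).PosSemidef

/-- Trace preserving map. -/
def IsTP [Fintype n] [Fintype m] (Φ : MatMap n m) : Prop :=
  ∀ ρ, (Φ ρ).trace = ρ.trace

/-- Trace non-increasing map (on positive semidefinite inputs). -/
def IsTNI [Fintype n] [Fintype m] (Φ : MatMap n m) : Prop :=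
  ∀ ρ : Matrix n n ℂ, ρ.PosSemidef → (Φ ρ).trace.re ≤ ρ.trace.re

/-- A quantum channel: CP and trace preserving. -/
def IsChannel [Fintype n] [DecidableEq n] [Fintype m] (Φ : MatMap n m) : Prop :=
  IsCP Φ ∧ IsTP Φ

/-- A quantum instrument: a finite family of CP maps summing to a TP map. -/
structure Instrument (ι n m : Type*) [Fintype ι] [Fintype n] [DecidableEq n] [Fintype m] where
  op : ι → MatMap n m
  cp : ∀ x, IsCP (op x)
  tp : IsTP (∑ x, op x)

/-- Partial trace over the second tensor factor, as a linear map. -/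
def ptrace₂ [Fintype m₁] [Fintype m₂] :
    Matrix (m₁ × m₂) (m₁ × m₂) ℂ →ₗ[ℂ] Matrix m₁ m₁ ℂ where
  toFun M := Matrix.of fun i j => ∑ k, M (i, k) (j, k)
  map_add' M N := by ext i j; simp [Finset.sum_add_distrib]
  map_smul' c M := by ext i j; simp [Finset.mul_sum]

/-- Partial trace over the first tensor factor, as a linear map. -/
def ptrace₁ [Fintype m₁] [Fintype m₂] :
    Matrix (m₁ × m₂) (m₁ × m₂) ℂ →ₗ[ℂ] Matrix m₂ m₂ ℂ where
  toFun M := Matrix.of fun i j => ∑ k, M (k, i) (k, j)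
  map_add' M N := by ext i j; simp [Finset.sum_add_distrib]
  map_smul' c M := by ext i j; simp [Finset.mul_sum]

/-- Parallel compatibility of two instruments. -/
def ParallelCompatible [Fintype ι₁] [Fintype ι₂] [Fintype n] [DecidableEq n]
    [Fintype m₁] [Fintype m₂]
    (I₁ : Instrument ι₁ n m₁) (I₂ : Instrument ι₂ n m₂) : Prop :=
  ∃ J : Instrument (ι₁ × ι₂) n (m₁ × m₂),
    (∀ x, ∑ y, ptrace₂ ∘ₗ J.op (x, y) = I₁.op x) ∧
    (∀ y, ∑ x, ptrace₁ ∘ₗ J.op (x, y) = I₂.op y)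

/-- The dual (Heisenberg picture) of a superoperator, characterized by
`tr[Φ(ρ) M] = tr[ρ Φ*(M)]`. -/
def dualMap [Fintype n] [DecidableEq n] [Fintype m] (Φ : MatMap n m) (M : Matrix m m ℂ) :
    Matrix n n ℂ :=
  Matrix.of fun i j => (Φ (Matrix.single j i 1) * M).trace

/-- A POVM: positive semidefinite effects summing to the identity. -/
def IsPOVM [Fintype n] [DecidableEq n] (A : ι → Matrix n n ℂ) [Fintype ι] : Prop :=
  (∀ x, (A x).PosSemidef) ∧ ∑ x, A x = 1

/-- The POVM induced by an instrument: `A(x) = Φ_x*(𝟙)`. -/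
def inducedPOVM [Fintype ι] [Fintype n] [DecidableEq n] [Fintype m] [DecidableEq m]
    (I : Instrument ι n m) (x : ι) : Matrix n n ℂ :=
  dualMap (I.op x) 1

/-- Compatibility of two POVMs via a joint POVM. -/
def POVMsCompatible [Fintype ι₁] [Fintype ι₂] [Fintype n] [DecidableEq n]
    (A₁ : ι₁ → Matrix n n ℂ) (A₂ : ι₂ → Matrix n n ℂ) : Prop :=
  ∃ G : ι₁ × ι₂ → Matrix n n ℂ, IsPOVM G ∧
    (∀ x, ∑ y, G (x, y) = A₁ x) ∧ (∀ y, ∑ x, G (x, y) = A₂ y)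

/-- Compatibility of two channels via a joint channel. -/
def ChannelsCompatible [Fintype n] [DecidableEq n] [Fintype m₁] [Fintype m₂]
    (Φ₁ : MatMap n m₁) (Φ₂ : MatMap n m₂) : Prop :=
  ∃ Λ : MatMap n (m₁ × m₂), IsChannel Λ ∧
    ptrace₂ ∘ₗ Λ = Φ₁ ∧ ptrace₁ ∘ₗ Λ = Φ₂

/-- Generalized incompatibility robustness of a pair of instruments. -/
def RI [Fintype ι₁] [Fintype ι₂] [Fintype n] [DecidableEq n]
    [Fintype m₁] [Fintype m₂]
    (I₁ : Instrument ι₁ n m₁) (I₂ : Instrument ι₂ n m₂) : ℝ :=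
  sInf {r : ℝ | 0 ≤ r ∧
    ∃ (N₁ : Instrument ι₁ n m₁) (N₂ : Instrument ι₂ n m₂)
      (J : Instrument (ι₁ × ι₂) n (m₁ × m₂)),
      (∀ x, ((1 + r : ℝ) : ℂ)⁻¹ • (I₁.op x + (r : ℂ) • N₁.op x)
          = ∑ y, ptrace₂ ∘ₗ J.op (x, y)) ∧
      (∀ y, ((1 + r : ℝ) : ℂ)⁻¹ • (I₂.op y + (r : ℂ) • N₂.op y)
          = ∑ x, ptrace₁ ∘ₗ J.op (x, y))}

/-- Generalized incompatibility robustness of a pair of POVMs. -/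
def RM [Fintype ι₁] [Fintype ι₂] [Fintype n] [DecidableEq n]
    (A₁ : ι₁ → Matrix n n ℂ) (A₂ : ι₂ → Matrix n n ℂ) : ℝ :=
  sInf {r : ℝ | 0 ≤ r ∧
    ∃ (B₁ : ι₁ → Matrix n n ℂ) (B₂ : ι₂ → Matrix n n ℂ) (G : ι₁ × ι₂ → Matrix n n ℂ),
      IsPOVM B₁ ∧ IsPOVM B₂ ∧ (∀ p, (G p).PosSemidef) ∧
      (∀ x, ((1 + r : ℝ) : ℂ)⁻¹ • (A₁ x + (r : ℂ) • B₁ x) = ∑ y, G (x, y)) ∧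
      (∀ y, ((1 + r : ℝ) : ℂ)⁻¹ • (A₂ y + (r : ℂ) • B₂ y) = ∑ x, G (x, y))}

/-- Generalized incompatibility robustness of a pair of channels. -/
def RC [Fintype n] [DecidableEq n] [Fintype m₁] [Fintype m₂]
    (Φ₁ : MatMap n m₁) (Φ₂ : MatMap n m₂) : ℝ :=
  sInf {r : ℝ | 0 ≤ r ∧
    ∃ (N₁ : MatMap n m₁) (N₂ : MatMap n m₂) (Λ : MatMap n (m₁ × m₂)),
      IsChannel N₁ ∧ IsChannel N₂ ∧ IsChannel Λ ∧
      ((1 + r : ℝ) : ℂ)⁻¹ • (Φ₁ + (r : ℂ) • N₁) = ptrace₂ ∘ₗ Λ ∧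
      ((1 + r : ℝ) : ℂ)⁻¹ • (Φ₂ + (r : ℂ) • N₂) = ptrace₁ ∘ₗ Λ}

/-- Post-processing relation on instruments: `I₂ ≲ I₁`. -/
def PostProcessingOf [Fintype ι₁] [Fintype ι₂] [Fintype n] [DecidableEq n]
    [Fintype m₁] [DecidableEq m₁] [Fintype m₂]
    (I₂ : Instrument ι₂ n m₂) (I₁ : Instrument ι₁ n m₁) : Prop :=
  ∃ R : ι₁ → Instrument ι₂ m₁ m₂,
    ∀ y, I₂.op y = ∑ x, (R x).op y ∘ₗ I₁.op x

/-- A density matrix (quantum state). -/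
def IsState [Fintype m] (η : Matrix m m ℂ) : Prop :=
  η.PosSemidef ∧ η.trace = 1

/-- A pure state. -/
def IsPureState [Fintype m] (η : Matrix m m ℂ) : Prop :=
  ∃ v : m → ℂ, (∑ i, star (v i) * v i) = 1 ∧ η = Matrix.vecMulVec v (star v)

/-- The trash-and-prepare map `ρ ↦ tr(ρ) • η`. -/
def trashPrep [Fintype n] [Fintype m] (η : Matrix m m ℂ) : MatMap n m :=
  (Matrix.traceLinearMap n ℂ ℂ).smulRight η

/-- Tensoring with a fixed matrix on the right, as a linear map. -/
def kronRight [Fintype m₁] [Fintype m₂] (B : Matrix m₂ m₂ ℂ) :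
    Matrix m₁ m₁ ℂ →ₗ[ℂ] Matrix (m₁ × m₂) (m₁ × m₂) ℂ where
  toFun A := A ⊗ₖ B
  map_add' A A' := by ext ⟨i, k⟩ ⟨j, l⟩; simp [Matrix.kroneckerMap_apply, add_mul]
  map_smul' c A := by ext ⟨i, k⟩ ⟨j, l⟩; simp [Matrix.kroneckerMap_apply, mul_assoc]

/-- Tensoring with a fixed matrix on the left, as a linear map. -/
def kronLeft [Fintype m₁] [Fintype m₂] (A : Matrix m₁ m₁ ℂ) :
    Matrix m₂ m₂ ℂ →ₗ[ℂ] Matrix (m₁ × m₂) (m₁ × m₂) ℂ where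
  toFun B := A ⊗ₖ B
  map_add' B B' := by ext ⟨i, k⟩ ⟨j, l⟩; simp [Matrix.kroneckerMap_apply, mul_add]
  map_smul' c B := by
    ext ⟨i, k⟩ ⟨j, l⟩
    simp only [Matrix.kroneckerMap_apply, Matrix.smul_apply, smul_eq_mul, RingHom.id_apply]
    ring

/-- Measure-and-prepare operation: `ρ ↦ tr(ρ A) • σ`. -/
def mpOp [Fintype n] [Fintype m] (A : Matrix n n ℂ) (σ : Matrix m m ℂ) : MatMap n m where
  toFun ρ := (ρ * A).trace • σ
  map_add' ρ ρ' := by simp [Matrix.add_mul, Matrix.trace_add, add_smul]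
  map_smul' c ρ := by simp [Matrix.smul_mul, Matrix.trace_smul, smul_smul]

/-- Conjugation by a Kraus operator: `ρ ↦ K ρ K†`. -/
def krausOp [Fintype n] [Fintype m] (K : Matrix m n ℂ) : MatMap n m where
  toFun ρ := K * ρ * Kᴴ
  map_add' ρ ρ' := by simp [Matrix.mul_add, Matrix.add_mul]
  map_smul' c ρ := by simp [Matrix.mul_smul, Matrix.smul_mul]

section Aux

variable {n' m' m₁' m₂' ι' ι₁' ι₂' κ' : Type*}

lemma trace_stdBasisMatrix_mul [Fintype n'] [DecidableEq n'] (i j : n') (A : Matrix n' n' ℂ) :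
    (Matrix.single i j 1 * A).trace = A j i := by
  classical
  simp [Matrix.trace, Matrix.diag, Matrix.mul_apply, Matrix.single, ite_and]

lemma mpOp_apply [Fintype n'] [Fintype m'] (A : Matrix n' n' ℂ) (σ : Matrix m' m' ℂ)
    (ρ : Matrix n' n' ℂ) : mpOp A σ ρ = (ρ * A).trace • σ := rfl

lemma kron_conjTranspose [Fintype m₁'] [Fintype m₂'] (B : Matrix m₁' m₁' ℂ)
    (C : Matrix m₂' m₂' ℂ) : (B ⊗ₖ C)ᴴ = Bᴴ ⊗ₖ Cᴴ := by
  ext ⟨i, k⟩ ⟨j, l⟩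
  simp [Matrix.conjTranspose_apply, Matrix.kroneckerMap_apply]

lemma posSemidef_kron {A : Matrix m₁' m₁' ℂ} {B : Matrix m₂' m₂' ℂ}
    [Fintype m₁'] [Fintype m₂'] [DecidableEq m₁'] [DecidableEq m₂']
    (hA : A.PosSemidef) (hB : B.PosSemidef) : (A ⊗ₖ B).PosSemidef := by
  exact hA.kronecker hB

lemma choi_mpOp [Fintype n'] [DecidableEq n'] [Fintype m'] (A : Matrix n' n' ℂ)
    (σ : Matrix m' m' ℂ) : choi (mpOp A σ) = Aᵀ ⊗ₖ σ := by
  ext ⟨i, k⟩ ⟨j, l⟩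
  simp [choi, mpOp_apply, trace_stdBasisMatrix_mul, Matrix.kroneckerMap_apply]

lemma isCP_mpOp [Fintype n'] [DecidableEq n'] [Fintype m'] [DecidableEq m']
    {A : Matrix n' n' ℂ} {σ : Matrix m' m' ℂ}
    (hA : A.PosSemidef) (hσ : σ.PosSemidef) : IsCP (mpOp A σ) := by
  rw [IsCP, choi_mpOp]
  exact posSemidef_kron hA.transpose hσ

lemma posSemidef_stdBasisMatrix [Fintype ι'] [DecidableEq ι'] (x : ι') :
    (Matrix.single x x (1 : ℂ)).PosSemidef := by
  rw [Matrix.posSemidef_iff_dotProduct_mulVec]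
  constructor
  · ext i j
    simp only [Matrix.conjTranspose_apply, Matrix.single, Matrix.of_apply, ite_and]
    split_ifs <;> simp_all
  · intro v
    have hmv : Matrix.single x x (1 : ℂ) *ᵥ v = fun i => if i = x then v x else 0 := by
      ext i
      simp [Matrix.mulVec, dotProduct, Matrix.single, ite_and,
        Finset.sum_ite_eq, Finset.sum_ite_eq', ite_mul, one_mul, zero_mul, eq_comm]
    rw [hmv]
    simp only [dotProduct, Pi.star_apply, mul_ite, mul_zero, Finset.sum_ite_eq',
      Finset.mem_univ, if_true]
    exact star_mul_self_nonneg _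

lemma posSemidef_sum {s : Finset κ'} {f : κ' → Matrix m' m' ℂ} [Fintype m']
    (h : ∀ k ∈ s, (f k).PosSemidef) : (∑ k ∈ s, f k).PosSemidef :=
  Finset.sum_induction f _ (fun _ _ ha hb => ha.add hb) .zero h

/-- `ptrace₂` preserves positive semidefiniteness. -/
lemma posSemidef_ptrace₂ [Fintype m₁'] [Fintype m₂'] [DecidableEq m₁'] [DecidableEq m₂']
    {M : Matrix (m₁' × m₂') (m₁' × m₂') ℂ} (hM : M.PosSemidef) :
    (ptrace₂ M).PosSemidef := by
  classical
  have key : ptrace₂ M = ∑ k : m₂',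
      (Matrix.of fun (i : m₁') (p : m₁' × m₂') => if p = (i, k) then (1 : ℂ) else 0) * M *
      (Matrix.of fun (i : m₁') (p : m₁' × m₂') => if p = (i, k) then (1 : ℂ) else 0)ᴴ := by
    ext i j
    simp only [ptrace₂, LinearMap.coe_mk, AddHom.coe_mk, Matrix.of_apply,
      Matrix.sum_apply, Matrix.mul_apply, Matrix.conjTranspose_apply]
    refine Finset.sum_congr rfl fun k _ => ?_
    have hstar : ∀ p : m₁' × m₂', star (if p = (j, k) then (1 : ℂ) else 0)
        = if p = (j, k) then 1 else 0 := fun p => by split_ifs <;> simp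
    simp only [hstar, mul_ite, mul_one, mul_zero, ite_mul, zero_mul, one_mul,
      Finset.sum_ite_eq', Finset.mem_univ, if_true]
  rw [key]
  exact posSemidef_sum fun k _ => hM.mul_mul_conjTranspose_same _

lemma dualMap_one_eq [Fintype n'] [DecidableEq n'] [Fintype m'] [DecidableEq m'] (Φ : MatMap n' m') :
    dualMap Φ 1 = (ptrace₂ (choi Φ))ᵀ := by
  ext i j
  simp [dualMap, choi, ptrace₂, Matrix.trace, Matrix.diag]

lemma posSemidef_dualMap_one [Fintype n'] [DecidableEq n'] [Fintype m'] [DecidableEq m']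
    {Φ : MatMap n' m'} (hΦ : IsCP Φ) : (dualMap Φ 1).PosSemidef := by
  rw [dualMap_one_eq]
  exact (posSemidef_ptrace₂ hΦ).transpose

lemma dualMap_add [Fintype n'] [DecidableEq n'] [Fintype m'] (Φ Ψ : MatMap n' m')
    (M : Matrix m' m' ℂ) : dualMap (Φ + Ψ) M = dualMap Φ M + dualMap Ψ M := by
  ext i j
  simp [dualMap, Matrix.add_mul]

lemma dualMap_smul [Fintype n'] [DecidableEq n'] [Fintype m'] (c : ℂ) (Φ : MatMap n' m')
    (M : Matrix m' m' ℂ) : dualMap (c • Φ) M = c • dualMap Φ M := by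
  ext i j
  simp [dualMap, Matrix.smul_mul]

lemma dualMap_sum [Fintype n'] [DecidableEq n'] [Fintype m'] {s : Finset κ'}
    (Φ : κ' → MatMap n' m') (M : Matrix m' m' ℂ) :
    dualMap (∑ k ∈ s, Φ k) M = ∑ k ∈ s, dualMap (Φ k) M := by
  ext i j
  simp [dualMap, Matrix.sum_mul, Matrix.trace_sum, LinearMap.sum_apply, Matrix.sum_apply]

lemma trace_ptrace₂ [Fintype m₁'] [Fintype m₂'] (M : Matrix (m₁' × m₂') (m₁' × m₂') ℂ) :
    (ptrace₂ M).trace = M.trace := by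
  simp [ptrace₂, Matrix.trace, Matrix.diag, Fintype.sum_prod_type]

lemma trace_ptrace₁ [Fintype m₁'] [Fintype m₂'] (M : Matrix (m₁' × m₂') (m₁' × m₂') ℂ) :
    (ptrace₁ M).trace = M.trace := by
  simp only [ptrace₁, Matrix.trace, Matrix.diag, LinearMap.coe_mk, AddHom.coe_mk,
    Matrix.of_apply]
  exact (Fintype.sum_prod_type_right (f := fun p : m₁' × m₂' => M p p)).symm

lemma dualMap_ptrace₂_comp [Fintype n'] [DecidableEq n'] [Fintype m₁'] [Fintype m₂'] [DecidableEq m₁'] [DecidableEq m₂']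
    (Φ : MatMap n' (m₁' × m₂')) : dualMap (ptrace₂ ∘ₗ Φ) 1 = dualMap Φ 1 := by
  ext i j
  simp only [dualMap, Matrix.of_apply, Matrix.mul_one, LinearMap.comp_apply]
  exact trace_ptrace₂ _

lemma dualMap_ptrace₁_comp [Fintype n'] [DecidableEq n'] [Fintype m₁'] [Fintype m₂'] [DecidableEq m₁'] [DecidableEq m₂']
    (Φ : MatMap n' (m₁' × m₂')) : dualMap (ptrace₁ ∘ₗ Φ) 1 = dualMap Φ 1 := by
  ext i j
  simp only [dualMap, Matrix.of_apply, Matrix.mul_one, LinearMap.comp_apply]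
  exact trace_ptrace₁ _

lemma dualMap_mpOp_one [Fintype n'] [DecidableEq n'] [Fintype m'] [DecidableEq m'] (A : Matrix n' n' ℂ)
    (σ : Matrix m' m' ℂ) : dualMap (mpOp A σ) 1 = σ.trace • A := by
  ext i j
  simp [dualMap, mpOp_apply, trace_stdBasisMatrix_mul, Matrix.trace_smul, mul_comm]

lemma dualMap_one_of_isTP [Fintype n'] [DecidableEq n'] [Fintype m'] [DecidableEq m'] {Φ : MatMap n' m'}
    (hΦ : IsTP Φ) : dualMap Φ 1 = 1 := by
  have htr : ∀ ρ : Matrix n' n' ℂ, (Φ ρ).trace = ρ.trace := hΦ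
  ext i j
  simp only [dualMap, Matrix.of_apply, Matrix.mul_one, htr]
  by_cases h : i = j
  · subst h; simp [Matrix.trace_single_eq_same]
  · rw [Matrix.trace_single_eq_of_ne _ _ _ (Ne.symm h)]
    simp [Matrix.one_apply, h]

/-- The induced POVM of an instrument is a POVM. -/
lemma isPOVM_induced [Fintype ι'] [Fintype n'] [DecidableEq n'] [Fintype m'] [DecidableEq m']
    (I : Instrument ι' n' m') : IsPOVM (fun x => dualMap (I.op x) 1) := by
  refine ⟨fun x => posSemidef_dualMap_one (I.cp x), ?_⟩
  rw [← dualMap_sum]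
  exact dualMap_one_of_isTP I.tp

lemma ptrace₂_comp_mpOp_kron [Fintype n'] [Fintype ι₁'] [DecidableEq ι₁'] [Fintype ι₂']
    [DecidableEq ι₂'] (G : Matrix n' n' ℂ) (x : ι₁') (y : ι₂') :
    ptrace₂ ∘ₗ mpOp G (Matrix.single x x 1 ⊗ₖ Matrix.single y y 1)
      = mpOp G (Matrix.single x x 1) := by
  refine LinearMap.ext fun ρ => ?_
  ext i j
  simp only [LinearMap.comp_apply, mpOp_apply, ptrace₂, LinearMap.coe_mk, AddHom.coe_mk,
    Matrix.of_apply, Matrix.smul_apply, Matrix.kroneckerMap_apply, smul_eq_mul]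
  rw [← Finset.mul_sum]
  congr 1
  simp [Matrix.single, ite_and, Finset.sum_ite_eq, Finset.sum_ite_eq',
    ite_mul, mul_ite, one_mul, mul_one, zero_mul, mul_zero]

lemma ptrace₁_comp_mpOp_kron [Fintype n'] [Fintype ι₁'] [DecidableEq ι₁'] [Fintype ι₂']
    [DecidableEq ι₂'] (G : Matrix n' n' ℂ) (x : ι₁') (y : ι₂') :
    ptrace₁ ∘ₗ mpOp G (Matrix.single x x 1 ⊗ₖ Matrix.single y y 1)
      = mpOp G (Matrix.single y y 1) := by
  refine LinearMap.ext fun ρ => ?_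
  ext i j
  simp only [LinearMap.comp_apply, mpOp_apply, ptrace₁, LinearMap.coe_mk, AddHom.coe_mk,
    Matrix.of_apply, Matrix.smul_apply, Matrix.kroneckerMap_apply, smul_eq_mul]
  rw [← Finset.mul_sum]
  congr 1
  simp [Matrix.single, ite_and, Finset.sum_ite_eq, Finset.sum_ite_eq',
    ite_mul, mul_ite, one_mul, mul_one, zero_mul, mul_zero]

lemma mpOp_add_left [Fintype n'] [Fintype m'] (A A' : Matrix n' n' ℂ) (σ : Matrix m' m' ℂ) :
    mpOp (A + A') σ = mpOp A σ + mpOp A' σ := by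
  refine LinearMap.ext fun ρ => ?_
  simp [mpOp_apply, Matrix.mul_add, Matrix.trace_add, add_smul]

lemma mpOp_smul_left [Fintype n'] [Fintype m'] (c : ℂ) (A : Matrix n' n' ℂ)
    (σ : Matrix m' m' ℂ) : mpOp (c • A) σ = c • mpOp A σ := by
  refine LinearMap.ext fun ρ => ?_
  simp [mpOp_apply, Matrix.mul_smul, Matrix.trace_smul, smul_smul]

lemma isTP_sum_mpOp [Fintype ι'] [Fintype n'] [DecidableEq n'] [Fintype m'] (B : ι' → Matrix n' n' ℂ)
    (σ : ι' → Matrix m' m' ℂ) (hσ : ∀ x, (σ x).trace = 1) (hB : ∑ x, B x = 1) :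
    IsTP (∑ x, mpOp (B x) (σ x)) := by
  intro ρ
  simp only [LinearMap.sum_apply, mpOp_apply, Matrix.trace_sum, Matrix.trace_smul, hσ,
    smul_eq_mul, mul_one]
  rw [← Matrix.trace_sum, ← Matrix.mul_sum, hB, Matrix.mul_one]

lemma mpOp_sum_left [Fintype n'] [Fintype m'] {s : Finset κ'} (A : κ' → Matrix n' n' ℂ)
    (σ : Matrix m' m' ℂ) : mpOp (∑ k ∈ s, A k) σ = ∑ k ∈ s, mpOp (A k) σ := by
  refine LinearMap.ext fun ρ => ?_
  simp [mpOp_apply, Matrix.mul_sum, Matrix.trace_sum, Finset.sum_smul]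

end Aux

end QI

end

open QI in
/-- for special measure-and-prepare instruments, `R_I = R_M`. -/
theorem RI_eq_RM_special_measure_prepare {ι₁ ι₂ n : Type*}
    [Fintype ι₁] [DecidableEq ι₁] [Fintype ι₂] [DecidableEq ι₂]
    [Fintype n] [DecidableEq n]
    (A₁ : ι₁ → Matrix n n ℂ) (A₂ : ι₂ → Matrix n n ℂ)
    (hA₁ : IsPOVM A₁) (hA₂ : IsPOVM A₂)
    (S₁ : Instrument ι₁ n ι₁)
    (hS₁ : ∀ x, S₁.op x = mpOp (A₁ x) (Matrix.single x x 1))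
    (S₂ : Instrument ι₂ n ι₂)
    (hS₂ : ∀ y, S₂.op y = mpOp (A₂ y) (Matrix.single y y 1)) :
    RI S₁ S₂ = RM A₁ A₂ := by
  unfold RI RM
  congr 1
  ext r
  simp only [Set.mem_setOf_eq]
  constructor
  · rintro ⟨hr0, N₁, N₂, J, h₁, h₂⟩
    refine ⟨hr0, fun x => dualMap (N₁.op x) 1, fun y => dualMap (N₂.op y) 1,
      fun p => dualMap (J.op p) 1, isPOVM_induced N₁, isPOVM_induced N₂,
      fun p => posSemidef_dualMap_one (J.cp p), ?_, ?_⟩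
    · intro x
      have h := congrArg (fun Φ => dualMap Φ 1) (h₁ x)
      simp only [dualMap_smul, dualMap_add, dualMap_sum, dualMap_ptrace₂_comp] at h
      rwa [hS₁ x, dualMap_mpOp_one, Matrix.trace_single_eq_same, one_smul] at h
    · intro y
      have h := congrArg (fun Φ => dualMap Φ 1) (h₂ y)
      simp only [dualMap_smul, dualMap_add, dualMap_sum, dualMap_ptrace₁_comp] at h
      rwa [hS₂ y, dualMap_mpOp_one, Matrix.trace_single_eq_same, one_smul] at h
  · rintro ⟨hr0, B₁, B₂, G, hB₁, hB₂, hGpos, h₁, h₂⟩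
    have hne : ((1 + r : ℝ) : ℂ) ≠ 0 := Complex.ofReal_ne_zero.mpr (by linarith)
    have hGsum : ∑ p : ι₁ × ι₂, G p = 1 := by
      rw [Fintype.sum_prod_type]
      have h : ∑ x, ∑ y, G (x, y) = ∑ x, ((1 + r : ℝ) : ℂ)⁻¹ • (A₁ x + (r : ℂ) • B₁ x) :=
        Finset.sum_congr rfl fun x _ => (h₁ x).symm
      rw [h, ← Finset.smul_sum, Finset.sum_add_distrib, hA₁.2, ← Finset.smul_sum, hB₁.2]
      have h2 : (1 : Matrix n n ℂ) + (r : ℂ) • 1 = ((1 + r : ℝ) : ℂ) • 1 := by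
        push_cast
        rw [add_smul, one_smul]
      rw [h2, smul_smul, inv_mul_cancel₀ hne, one_smul]
    refine ⟨hr0,
      ⟨fun x => mpOp (B₁ x) (Matrix.single x x 1),
        fun x => isCP_mpOp (hB₁.1 x) (posSemidef_stdBasisMatrix x),
        isTP_sum_mpOp _ _ (fun x => Matrix.trace_single_eq_same x (1 : ℂ)) hB₁.2⟩,
      ⟨fun y => mpOp (B₂ y) (Matrix.single y y 1),
        fun y => isCP_mpOp (hB₂.1 y) (posSemidef_stdBasisMatrix y),
        isTP_sum_mpOp _ _ (fun y => Matrix.trace_single_eq_same y (1 : ℂ)) hB₂.2⟩,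
      ⟨fun p => mpOp (G p)
          (Matrix.single p.1 p.1 1 ⊗ₖ Matrix.single p.2 p.2 1),
        fun p => isCP_mpOp (hGpos p)
          (posSemidef_kron (posSemidef_stdBasisMatrix p.1) (posSemidef_stdBasisMatrix p.2)),
        isTP_sum_mpOp _ _ (fun p => by
          rw [Matrix.trace_kronecker, Matrix.trace_single_eq_same,
            Matrix.trace_single_eq_same, mul_one]) hGsum⟩, ?_, ?_⟩
    · intro x
      simp only [ptrace₂_comp_mpOp_kron]
      rw [← mpOp_sum_left, hS₁ x, ← mpOp_smul_left (r : ℂ), ← mpOp_add_left,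
        ← mpOp_smul_left, h₁ x]
    · intro y
      simp only [ptrace₁_comp_mpOp_kron]
      rw [← mpOp_sum_left, hS₂ y, ← mpOp_smul_left (r : ℂ), ← mpOp_add_left,
        ← mpOp_smul_left, h₂ y]
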